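/- Let p be a prime, n, m ≥ 1, and GR(p^n,m) = (ZMod (p^n))[X]/(f) for a monic basic irreducible f of degree m. If x and y are distinct elements of GR(p^n,m) satisfying x^{p^m} = x and y^{p^m} = y, then x − y is a unit of GR(p^n,m). In other words, the Teichmüller set T = {x : x^{p^m} = x} is a subtractive subset of GR(p^n,m). -/

import Mathlib

/-- The Teichmüller set `T = {x : x ^ (p^m) = x}` of the Galois ring
`GR(p^n, m)` is subtractive: the difference of any two distinct Teichmüller elements is a
unit. -/
theorem galois_ring_teichmuller_subtractive (p n m : ℕ) (hp : p.Prime) (hn : 0 < n) (hm : 0 < m)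
    (f : Polynomial (ZMod (p ^ n))) (hf : f.Monic) (hdeg : f.natDegree = m)
    (hirr : Irreducible (f.map (ZMod.castHom (dvd_pow_self p hn.ne') (ZMod p)))) :
    ∀ x y : AdjoinRoot f, x ^ p ^ m = x → y ^ p ^ m = y → x ≠ y →
      IsUnit (x - y) := by
  haveI := Fact.mk hp
  haveI : Fact (1 < p ^ n) := ⟨Nat.one_lt_pow hn.ne' hp.one_lt⟩
  haveI := Fact.mk hirr
  set c : ZMod (p ^ n) →+* ZMod p := ZMod.castHom (dvd_pow_self p hn.ne') (ZMod p) with hc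
  set fbar : Polynomial (ZMod p) := f.map c with hfbar
  have hfbar_monic : fbar.Monic := hf.map c
  -- the reduction map to the residue field
  have hroot : f.eval₂ ((AdjoinRoot.of fbar).comp c) (AdjoinRoot.root fbar) = 0 := by
    rw [← Polynomial.eval₂_map]
    exact AdjoinRoot.eval₂_root fbar
  set φ : AdjoinRoot f →+* AdjoinRoot fbar :=
    AdjoinRoot.lift ((AdjoinRoot.of fbar).comp c) (AdjoinRoot.root fbar) hroot with hφ
  have hφmk : ∀ g : Polynomial (ZMod (p ^ n)),
      φ (AdjoinRoot.mk f g) = AdjoinRoot.mk fbar (g.map c) := by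
    intro g
    rw [hφ, AdjoinRoot.lift_mk, ← AdjoinRoot.aeval_eq, Polynomial.aeval_def,
      AdjoinRoot.algebraMap_eq, Polynomial.eval₂_map]
  -- p divides c-kernel elements
  have hcker : ∀ a : ZMod (p ^ n), c a = 0 → (p : ZMod (p ^ n)) ∣ a := by
    intro a ha
    have hv : ((a.val : ℕ) : ZMod p) = 0 := by
      rw [hc, ZMod.castHom_apply] at ha
      rw [ZMod.natCast_val]
      exact ha
    rw [ZMod.natCast_eq_zero_iff] at hv
    obtain ⟨t, ht⟩ := hv
    refine ⟨(t : ZMod (p ^ n)), ?_⟩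
    have : ((a.val : ℕ) : ZMod (p ^ n)) = a := by
      rw [ZMod.natCast_val, ZMod.cast_id]
    rw [← this, ht]
    push_cast
    ring
  -- kernel of φ consists of multiples of p
  have hker : ∀ a : AdjoinRoot f, φ a = 0 → ∃ b : AdjoinRoot f, a = (p : AdjoinRoot f) * b := by
    intro a ha
    obtain ⟨g, rfl⟩ := AdjoinRoot.mk_surjective (g := f) a
    -- replace g by its remainder mod f
    have hmod : AdjoinRoot.mk f (g %ₘ f) = AdjoinRoot.mk f g := by
      conv_rhs => rw [← Polynomial.modByMonic_add_div g f]
      rw [map_add, map_mul, AdjoinRoot.mk_self, zero_mul, add_zero]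
    rw [← hmod] at ha ⊢
    rw [hφmk, AdjoinRoot.mk_eq_zero] at ha
    have hdeglt : ((g %ₘ f).map c).degree < fbar.degree := by
      calc ((g %ₘ f).map c).degree ≤ (g %ₘ f).degree := Polynomial.degree_map_le
        _ < f.degree := Polynomial.degree_modByMonic_lt g hf
        _ = fbar.degree := (hf.degree_map c).symm
    have hzero : (g %ₘ f).map c = 0 := Polynomial.eq_zero_of_dvd_of_degree_lt ha hdeglt
    have hdvd : Polynomial.C ((p : ℕ) : ZMod (p ^ n)) ∣ g %ₘ f := by
      rw [Polynomial.C_dvd_iff_dvd_coeff]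
      intro i
      apply hcker
      have := congrArg (fun q => Polynomial.coeff q i) hzero
      simpa [Polynomial.coeff_map] using this
    obtain ⟨r, hr⟩ := hdvd
    refine ⟨AdjoinRoot.mk f r, ?_⟩
    rw [hr, map_mul, Polynomial.C_eq_natCast, map_natCast]
  -- p is nilpotent
  have hpn0 : (p : AdjoinRoot f) ^ n = 0 := by
    rw [← Nat.cast_pow, ← map_natCast (AdjoinRoot.of f), ZMod.natCast_self, map_zero]
  -- p = 0 in the residue field
  have hpk0 : (p : AdjoinRoot fbar) = 0 := by
    rw [← map_natCast (AdjoinRoot.of fbar), ZMod.natCast_self, map_zero]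
  -- surjectivity of φ
  have hcsurj : Function.Surjective c := by
    intro b
    refine ⟨((b.val : ℕ) : ZMod (p ^ n)), ?_⟩
    rw [map_natCast, ZMod.natCast_val, ZMod.cast_id]
  have hsurj : Function.Surjective φ := by
    intro z
    obtain ⟨g', rfl⟩ := AdjoinRoot.mk_surjective z
    obtain ⟨g, hg⟩ := Polynomial.map_surjective c hcsurj g'
    exact ⟨AdjoinRoot.mk f g, by rw [hφmk, hg]⟩
  -- main argument
  intro x y hx hy hxy
  set q := p ^ m with hq
  set d := x - y with hd
  set S := ∑ i ∈ Finset.range q, x ^ i * y ^ (q - 1 - i) with hS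
  have hdS : S * d = d := by
    rw [hS, hd, geom_sum₂_mul, hx, hy]
  by_cases h0 : φ d = 0
  · exfalso
    have hxyφ : φ x = φ y := by
      have : φ x - φ y = 0 := by rw [← map_sub, ← hd, h0]
      exact sub_eq_zero.mp this
    have hφS : φ S = 0 := by
      rw [hS, map_sum]
      have key : ∀ i ∈ Finset.range q, φ (x ^ i * y ^ (q - 1 - i)) = φ x ^ (q - 1) := by
        intro i hi
        rw [Finset.mem_range] at hi
        rw [map_mul, map_pow, map_pow, ← hxyφ, ← pow_add]
        congr 1
        omega
      rw [Finset.sum_congr rfl key, Finset.sum_const, Finset.card_range, nsmul_eq_mul,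
        hq, Nat.cast_pow, hpk0, zero_pow hm.ne', zero_mul]
    obtain ⟨b, hb⟩ := hker S hφS
    have hSnil : IsNilpotent S := ⟨n, by rw [hb, mul_pow, hpn0, zero_mul]⟩
    have hunit : IsUnit (1 - S) := hSnil.isUnit_one_sub
    have hd0 : d * (1 - S) = 0 := by
      rw [mul_sub, mul_one, mul_comm, hdS, sub_self]
    have : d = 0 := by
      obtain ⟨u, hu⟩ := hunit
      have := congrArg (· * (↑u⁻¹ : AdjoinRoot f)) hd0
      simpa [← hu, mul_assoc] using this
    exact hxy (sub_eq_zero.mp this)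
  · obtain ⟨e, he⟩ := hsurj (φ d)⁻¹
    have hker0 : φ (d * e - 1) = 0 := by
      rw [map_sub, map_mul, he, map_one, mul_inv_cancel₀ h0, sub_self]
    obtain ⟨b, hb⟩ := hker _ hker0
    have hde : d * e = 1 - (-((p : AdjoinRoot f) * b)) := by
      rw [sub_neg_eq_add, ← hb]; ring
    have hnilb : IsNilpotent (-((p : AdjoinRoot f) * b)) :=
      ⟨n, by rw [neg_pow, mul_pow, hpn0, zero_mul, mul_zero]⟩
    have hu : IsUnit (d * e) := hde ▸ hnilb.isUnit_one_sub
    exact isUnit_of_mul_isUnit_left hu
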